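/- Let b be a basis of a simple matroid M on ground set E such that the sets F_{ij} ∖ {i,j} for i, j ∈ b (where F_{ij} = cl({i,j})) partition E ∖ b. Then: (a) crem_b descends to a linear automorphism of ℝ^E/ℝ𝟙; (b) for every flat G of M, writing F_a = cl({b_i : b_i ∈ a}) for subsets a ⊆ b, the flat G is the disjoint union of the two flats F_{b∩G} and G ∩ F_{b∖G}; (c) in ℝ^E/ℝ𝟙 one has crem_b(v_{G ∩ F_{b∖G}}) = v_{G ∩ F_{b∖G}} and crem_b(v_{F_{b∩G}}) = v_{F_{b∖G}}. -/

import Mathlib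

open Set Function
open scoped Matroid Classical

namespace BergmanFans

variable {α β γ : Type*}

/-! ### Matroid notions -/

/-- A circuit of a matroid: a minimal dependent set. -/
def Circuit (M : Matroid α) (C : Set α) : Prop :=
  M.Dep C ∧ ∀ D, D ⊂ C → M.Indep D

/-- The rank of a subset: the largest cardinality of an independent subset. -/
noncomputable def rkSet (M : Matroid α) (X : Set α) : ℕ :=
  sSup {n | ∃ I, I ⊆ X ∧ M.Indep I ∧ I.ncard = n}

/-- The rank of a matroid. -/
noncomputable def rk (M : Matroid α) : ℕ := rkSet M M.E

/-- A matroid is loopfree if every singleton of the ground set is independent. -/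
def Loopfree (M : Matroid α) : Prop := ∀ i ∈ M.E, M.Indep {i}

/-- A matroid is simple if it has no loops and no parallel pairs. -/
def Simple (M : Matroid α) : Prop := ∀ i ∈ M.E, ∀ j ∈ M.E, M.Indep {i, j}

/-- Two elements are related if they are equal or lie on a common circuit. -/
def ConnRel (M : Matroid α) (i j : α) : Prop :=
  i = j ∨ ∃ C, Circuit M C ∧ i ∈ C ∧ j ∈ C

/-- The connected component of an element. -/
def component (M : Matroid α) (i : α) : Set α := {j ∈ M.E | ConnRel M i j}

/-- A matroid is connected if all pairs of elements of the ground set lie on common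
circuits. -/
def Connected (M : Matroid α) : Prop :=
  M.E.Nonempty ∧ ∀ i ∈ M.E, ∀ j ∈ M.E, ConnRel M i j

/-- A matroid is totally disconnected if every connected component has rank at most one. -/
def TotallyDisconnected (M : Matroid α) : Prop :=
  ∀ i ∈ M.E, rkSet M (component M i) ≤ 1

/-- Contraction of a set, defined by duality. -/
noncomputable def contract (M : Matroid α) (C : Set α) : Matroid α := (M✶ ↾ (M.E \ C))✶

/-- A matroid isomorphism along a bijection of the underlying types. -/
def IsMatroidIso (M₁ : Matroid α) (M₂ : Matroid β) (f : α ≃ β) : Prop :=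
  f '' M₁.E = M₂.E ∧ ∀ I, I ⊆ M₁.E → (M₁.Indep I ↔ M₂.Indep (f '' I))

/-- `M` is the parallel connection of `N₁` and `N₂` along `p`, described via circuits. -/
def IsParallelConnAt (M N₁ N₂ : Matroid γ) (p : γ) : Prop :=
  N₁.E ∪ N₂.E = M.E ∧ N₁.E ∩ N₂.E = {p} ∧
  ∀ C, Circuit M C ↔ (Circuit N₁ C ∨ Circuit N₂ C ∨
    ∃ C₁ C₂, Circuit N₁ C₁ ∧ Circuit N₂ C₂ ∧ p ∈ C₁ ∧ p ∈ C₂ ∧ C = (C₁ ∪ C₂) \ {p})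

/-- `M` is a non-trivial parallel connection along `p`. -/
def IsNontrivParallelConnAt (M : Matroid γ) (p : γ) : Prop :=
  ∃ N₁ N₂, IsParallelConnAt M N₁ N₂ p ∧ 2 ≤ rk N₁ ∧ 2 ≤ rk N₂

/-- `M` is a non-trivial parallel connection. -/
def IsNontrivParallelConn (M : Matroid γ) : Prop := ∃ p, IsNontrivParallelConnAt M p

/-- `M` is the parallel connection of matroids `M₁`, `M₂` on other ground types, glued
along `p₁ ∈ E(M₁)` and `p₂ ∈ E(M₂)` via the injections `g₁`, `g₂`. -/
def IsParallelConnEmb (M : Matroid γ) (M₁ : Matroid α) (M₂ : Matroid β)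
    (g₁ : α → γ) (g₂ : β → γ) (p₁ : α) (p₂ : β) : Prop :=
  Injective g₁ ∧ Injective g₂ ∧ range g₁ ∪ range g₂ = univ ∧
    range g₁ ∩ range g₂ = {g₁ p₁} ∧ g₁ p₁ = g₂ p₂ ∧
    ∀ C, Circuit M C ↔
      ((∃ C₁, Circuit M₁ C₁ ∧ C = g₁ '' C₁) ∨ (∃ C₂, Circuit M₂ C₂ ∧ C = g₂ '' C₂) ∨
        (∃ C₁ C₂, Circuit M₁ C₁ ∧ Circuit M₂ C₂ ∧ p₁ ∈ C₁ ∧ p₂ ∈ C₂ ∧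
          C = (g₁ '' C₁ ∪ g₂ '' C₂) \ {g₁ p₁}))

/-! ### The ambient space `ℝ^E/ℝ𝟙` and its lattice -/

variable (α) [Fintype α]

/-- The line `ℝ𝟙 ⊆ ℝ^E`. -/
noncomputable def lineSub : Submodule ℝ (α → ℝ) := Submodule.span ℝ {fun _ => (1 : ℝ)}

/-- The ambient space `ℝ^E/ℝ𝟙`. -/
abbrev Amb := (α → ℝ) ⧸ lineSub α

/-- The quotient map `ℝ^E → ℝ^E/ℝ𝟙`. -/
noncomputable def proj : (α → ℝ) →ₗ[ℝ] Amb α := (lineSub α).mkQ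

/-- The lattice `ℤ^E/ℤ𝟙` inside `ℝ^E/ℝ𝟙`. -/
noncomputable def intLatt : Set (Amb α) :=
  proj α '' {x | ∀ i, ∃ n : ℤ, x i = (n : ℝ)}

variable {α}

/-- The indicator vector `v_S ∈ ℝ^E` of a subset `S ⊆ E`. -/
noncomputable def indic (S : Set α) : α → ℝ := S.indicator 1

/-! ### Fans and their isomorphisms -/

variable {V W : Type*} [AddCommGroup V] [Module ℝ V] [AddCommGroup W] [Module ℝ W]

/-- A linear map induced by an isomorphism of the lattices `LV`, `LW`. -/
def IsLatticeLinearIso (LV : Set V) (LW : Set W) (φ : V →ₗ[ℝ] W) : Prop :=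
  Function.Bijective φ ∧ φ '' LV = LW

/-- `φ` is an isomorphism of the fans `S₁`, `S₂` (viewed as their collections of cones)
with respect to the lattices `LV`, `LW`: it is induced by a lattice isomorphism, maps cones
to cones, and its inverse maps cones to cones. -/
def IsFanIso (LV : Set V) (LW : Set W) (φ : V →ₗ[ℝ] W)
    (S₁ : Set (Set V)) (S₂ : Set (Set W)) : Prop :=
  IsLatticeLinearIso LV LW φ ∧ (∀ σ ∈ S₁, φ '' σ ∈ S₂) ∧ ∀ τ ∈ S₂, φ ⁻¹' τ ∈ S₁

/-- The ray spanned by a vector. -/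
def rayOf (u : V) : Set V := {x | ∃ t : ℝ, 0 ≤ t ∧ x = t • u}

/-- The product of two fans. -/
def prodFan (S₁ : Set (Set V)) (S₂ : Set (Set W)) : Set (Set (V × W)) :=
  {σ | ∃ σ₁ ∈ S₁, ∃ σ₂ ∈ S₂, σ = σ₁ ×ˢ σ₂}

/-! ### Bergman fans -/

/-- The affine Bergman fan: the set of `x` such that for every circuit `C` the minimum of
the values of `x` on `C` is attained at least twice. -/
def affBergman (M : Matroid α) : Set (α → ℝ) :=
  {x | ∀ C, Circuit M C → ∃ i ∈ C, ∃ j ∈ C, i ≠ j ∧ x i = x j ∧ ∀ k ∈ C, x i ≤ x k}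

/-- The projective Bergman fan `B(M) ⊆ ℝ^E/ℝ𝟙`, as a set. -/
noncomputable def projBergman (M : Matroid α) : Set (Amb α) := proj α '' affBergman M

/-- A proper nonempty flat. -/
def ProperFlat (M : Matroid α) (F : Set α) : Prop := M.IsFlat F ∧ F.Nonempty ∧ F ≠ M.E

/-- The cone spanned by the classes of the indicator vectors of a finite collection of
subsets of the ground set. -/
noncomputable def flagCone (𝒞 : Finset (Set α)) : Set (Amb α) :=
  {x | ∃ c : Set α → ℝ, (∀ F, 0 ≤ c F) ∧ x = ∑ F ∈ 𝒞, c F • proj α (indic F)}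

/-- The fine fan structure on the Bergman fan: cones are spanned by flags of proper
nonempty flats. -/
noncomputable def fineFan (M : Matroid α) : Set (Set (Amb α)) :=
  {σ | ∃ 𝒞 : Finset (Set α), IsChain (· ⊆ ·) (𝒞 : Set (Set α)) ∧
    (∀ F ∈ 𝒞, ProperFlat M F) ∧ σ = flagCone 𝒞}

/-- The `w`-weight of a subset. -/
noncomputable def wt (w : α → ℝ) (B : Set α) : ℝ := ∑ i, B.indicator w i

/-- The set of bases of `M` of minimal `w`-weight: the face of the matroid polytope
selected by `w`. -/
noncomputable def minBases (M : Matroid α) (w : α → ℝ) : Set (Set α) :=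
  {B | M.IsBase B ∧ ∀ B', M.IsBase B' → wt w B ≤ wt w B'}

/-- The closed normal cone of the face of the matroid polytope selected by `w₀`. -/
noncomputable def normalCone (M : Matroid α) (w₀ : α → ℝ) : Set (α → ℝ) :=
  {w | minBases M w₀ ⊆ minBases M w}

/-- The coarse fan structure on the Bergman fan: the cones of the normal fan of the
matroid polytope whose support lies in the Bergman fan. -/
noncomputable def coarseFan (M : Matroid α) : Set (Set (Amb α)) :=
  {σ | ∃ w₀ : α → ℝ, normalCone M w₀ ⊆ affBergman M ∧ σ = proj α '' normalCone M w₀}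

/-! ### Cremona maps -/

/-- The image of the basis vector `v_k` under the Cremona map of the basis `b`. -/
noncomputable def cremTarget (M : Matroid α) (b : Set α) (k : α) : α → ℝ :=
  if k ∈ b then indic (M.closure (b \ {k})) else indic {k}

/-- The affine Cremona map associated to a basis `b` of `M`: it sends `v_k ↦ v_{cl(b\k)}`
for `k ∈ b` and fixes `v_k` for `k ∉ b`. -/
noncomputable def cremAff (M : Matroid α) (b : Set α) : (α → ℝ) →ₗ[ℝ] (α → ℝ) where
  toFun x := ∑ k, x k • cremTarget M b k
  map_add' x y := by
    simp [add_smul, Finset.sum_add_distrib]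
  map_smul' c x := by
    simp [smul_smul, Finset.smul_sum]

end BergmanFans


namespace BergmanFans

section Aux

variable {α : Type*} [Fintype α] {M : Matroid α} {b : Set α}

lemma indic_apply (S : Set α) (m : α) : indic S m = if m ∈ S then 1 else 0 := by
  simp [indic, Set.indicator_apply]

lemma cremAff_apply (M : Matroid α) (b : Set α) (x : α → ℝ) (m : α) :
    cremAff M b x m = ∑ k, x k * cremTarget M b k m := by
  simp [cremAff]

lemma memE (hE : M.E = Set.univ) (x : α) : x ∈ M.E := by rw [hE]; exact Set.mem_univ x

lemma cl_single (hE : M.E = Set.univ) (hs : Simple M) (i : α) : M.closure {i} = {i} := by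
  refine subset_antisymm ?_ (M.subset_closure _ (by rw [hE]; exact Set.subset_univ _))
  intro x hx
  have hi : M.Indep {i} := by
    have := hs i (memE hE i) i (memE hE i)
    simpa using this
  rcases hi.mem_closure_iff.1 hx with hd | h
  · exact absurd (hs x (memE hE x) i (memE hE i)) hd.not_indep
  · exact h

lemma cl_empty (hE : M.E = Set.univ) (hs : Simple M) : M.closure ∅ = ∅ := by
  ext x
  simp only [Set.mem_empty_iff_false, iff_false]
  intro hx
  rcases M.empty_indep.mem_closure_iff.1 hx with hd | h
  · have : M.Indep {x} := by simpa using hs x (memE hE x) x (memE hE x)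
    exact hd.not_indep (by simpa using this)
  · exact h

lemma mem_cl_basis (hE : M.E = Set.univ) (hb : M.IsBase b) {l : α} (hl : l ∈ b)
    {S : Set α} (hS : S ⊆ b) : l ∈ M.closure S ↔ l ∈ S := by
  constructor
  · intro h
    by_contra hlS
    have hsub : S ⊆ b \ {l} :=
      fun z hz => ⟨hS hz, fun hzl => hlS (Set.mem_singleton_iff.1 hzl ▸ hz)⟩
    exact hb.indep.notMem_closure_sdiff_of_mem hl (M.closure_subset_closure hsub h)
  · intro h
    exact M.subset_closure S (by rw [hE]; exact Set.subset_univ _) h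

lemma pair_forces (hE : M.E = Set.univ) (hs : Simple M) (hb : M.IsBase b)
    {k x y : α} (hx : x ∈ b) (hy : y ∈ b) (hxy : x ≠ y)
    (hk : k ∈ M.closure {x, y}) (hky : k ≠ y)
    {S : Set α} (hS : S ⊆ b) (hmem : k ∈ M.closure S) : x ∈ S := by
  by_contra hxS
  have hScl : S ⊆ b \ {x} :=
    fun z hz => ⟨hS hz, fun hzl => hxS (Set.mem_singleton_iff.1 hzl ▸ hz)⟩
  have hk1 : k ∈ M.closure (b \ {x}) := M.closure_subset_closure hScl hmem
  have hknotcly : k ∉ M.closure {y} := by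
    rw [cl_single hE hs]; simpa using hky
  have hx' : x ∈ M.closure (insert k {y}) :=
    (Matroid.closure_exchange ⟨hk, hknotcly⟩).1
  have hsub : (insert k {y} : Set α) ⊆ M.closure (b \ {x}) := by
    intro z hz
    rcases hz with rfl | hz
    · exact hk1
    · rw [Set.mem_singleton_iff] at hz
      subst hz
      exact M.subset_closure _ (by rw [hE]; exact Set.subset_univ _)
        ⟨hy, fun h => hxy (Set.mem_singleton_iff.1 h).symm⟩
  have hfin : x ∈ M.closure (M.closure (b \ {x})) := M.closure_subset_closure hsub hx'
  rw [M.closure_closure] at hfin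
  exact hb.indep.notMem_closure_sdiff_of_mem hx hfin

lemma mem_cl_pair (hE : M.E = Set.univ) (hs : Simple M) (hb : M.IsBase b)
    {k i j : α} (hi : i ∈ b) (hj : j ∈ b) (hij : i ≠ j)
    (hk : k ∈ M.closure {i, j} \ ({i, j} : Set α))
    {S : Set α} (hS : S ⊆ b) : k ∈ M.closure S ↔ i ∈ S ∧ j ∈ S := by
  have hki : k ≠ i := fun h => hk.2 (by simp [h])
  have hkj : k ≠ j := fun h => hk.2 (by simp [h])
  constructor
  · intro h
    have hk1 : k ∈ M.closure {j, i} := by rw [Set.pair_comm]; exact hk.1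
    exact ⟨pair_forces hE hs hb hi hj hij hk.1 hkj hS h,
      pair_forces hE hs hb hj hi hij.symm hk1 hki hS h⟩
  · rintro ⟨hiS, hjS⟩
    refine M.closure_subset_closure ?_ hk.1
    intro z hz
    rcases hz with rfl | hz
    · exact hiS
    · rw [Set.mem_singleton_iff] at hz; subst hz; exact hjS

lemma flat_closure (M : Matroid α) (X : Set α) : M.IsFlat (M.closure X) := by
  rw [Matroid.closure_def, Set.sInter_eq_iInter]
  have : Nonempty {F // F ∈ {F | M.IsFlat F ∧ X ∩ M.E ⊆ F}} :=
    ⟨⟨M.E, M.ground_isFlat, Set.inter_subset_right⟩⟩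
  exact Matroid.IsFlat.iInter fun F => F.2.1

lemma crem_single (M : Matroid α) (b : Set α) (k : α) :
    cremAff M b (indic {k}) = cremTarget M b k := by
  funext m
  rw [cremAff_apply, Finset.sum_eq_single k]
  · simp [indic_apply]
  · intro l _ hlk
    simp [indic_apply, hlk]
  · simp

lemma crem_fix (S : Set α) (hSb : ∀ k ∈ S, k ∉ b) :
    cremAff M b (indic S) = indic S := by
  funext m
  rw [cremAff_apply, Finset.sum_eq_single m]
  · by_cases hm : m ∈ S
    · have hmb : m ∉ b := hSb m hm
      simp [indic_apply, hm, cremTarget, hmb]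
    · simp [indic_apply, hm]
  · intro l _ hlm
    by_cases hl : l ∈ S
    · have hlb : l ∉ b := hSb l hl
      have hml : m ∉ ({l} : Set α) := fun h => hlm (Set.mem_singleton_iff.1 h).symm
      simp [cremTarget, hlb, indic_apply, hml]
    · simp [indic_apply, hl]
  · simp

lemma flat_pair_step (hE : M.E = Set.univ) (hs : Simple M) {G : Set α} (hG : M.IsFlat G)
    {x y k : α} (hxG : x ∈ G) (hkG : k ∈ G)
    (hcl : k ∈ M.closure {x, y}) (hkx : k ≠ x) : y ∈ G := by
  have h1 : k ∉ M.closure {x} := by rw [cl_single hE hs]; simpa using hkx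
  rw [Set.pair_comm] at hcl
  have h2 : y ∈ M.closure (insert k {x}) :=
    (Matroid.closure_exchange ⟨hcl, h1⟩).1
  have h3 : (insert k {x} : Set α) ⊆ G := by
    intro z hz
    rcases hz with rfl | hz
    · exact hkG
    · rw [Set.mem_singleton_iff] at hz; subst hz; exact hxG
  have := M.closure_subset_closure h3 h2
  rwa [hG.closure] at this

lemma master (hE : M.E = Set.univ) (hs : Simple M) (hb : M.IsBase b)
    (hcover : ∀ k, k ∉ b → ∃ i ∈ b, ∃ j ∈ b, i ≠ j ∧ k ∈ M.closure {i, j} \ {i, j})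
    {G : Set α} (hG : M.IsFlat G) :
    cremAff M b (indic (M.closure (b ∩ G))) =
      indic (M.closure (b \ G)) +
        ((∑ k : α, if k ∈ b ∩ G then (1 : ℝ) else 0) - 1) • (fun _ => (1 : ℝ)) := by
  funext m
  have haS : b ∩ G ⊆ b := Set.inter_subset_left
  have hdS : b \ G ⊆ b := Set.diff_subset
  have hFb : ∀ k ∈ b, (k ∈ M.closure (b ∩ G) ↔ k ∈ b ∩ G) :=
    fun k hk => mem_cl_basis hE hb hk haS
  rw [cremAff_apply]
  simp only [Pi.add_apply, Pi.smul_apply, smul_eq_mul, mul_one]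
  by_cases hm : m ∈ b
  · have hsum : ∀ k : α, indic (M.closure (b ∩ G)) k * cremTarget M b k m =
        (if k ∈ b ∩ G then (1 : ℝ) else 0) -
          (if k = m then (if m ∈ b ∩ G then (1 : ℝ) else 0) else 0) := by
      intro k
      by_cases hkb : k ∈ b
      · have e1 : k ∈ M.closure (b ∩ G) ↔ k ∈ b ∩ G := hFb k hkb
        have e2 : m ∈ M.closure (b \ {k}) ↔ ¬(k = m) := by
          rw [mem_cl_basis hE hb hm Set.diff_subset]
          simp [hm, eq_comm]
        simp only [cremTarget, if_pos hkb, indic_apply]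
        by_cases h4 : k = m
        · subst h4
          by_cases h3 : k ∈ b ∩ G <;> simp [e1, e2, h3]
        · by_cases h3 : k ∈ b ∩ G <;> simp [e1, e2, h3, h4]
      · have hkm : ¬ k = m := fun h => hkb (h ▸ hm)
        have e1 : k ∉ b ∩ G := fun h => hkb h.1
        have hmk : m ∉ ({k} : Set α) := fun h => hkm (Set.mem_singleton_iff.1 h).symm
        simp only [cremTarget, if_neg hkb, indic_apply]
        simp [hkm, e1, hmk]
    rw [Finset.sum_congr rfl fun k _ => hsum k, Finset.sum_sub_distrib,
      Finset.sum_ite_eq' Finset.univ m]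
    simp only [Finset.mem_univ, if_true]
    have e5 : m ∈ M.closure (b \ G) ↔ m ∉ G := by
      rw [mem_cl_basis hE hb hm hdS]
      simp [hm]
    rw [indic_apply]
    by_cases hmG : m ∈ G <;> simp [e5, hmG, hm] <;> ring
  · obtain ⟨i, hi, j, hj, hij, hkm⟩ := hcover m hm
    have P : ∀ S : Set α, S ⊆ b → (m ∈ M.closure S ↔ i ∈ S ∧ j ∈ S) :=
      fun S hS => mem_cl_pair hE hs hb hi hj hij hkm hS
    have hsum : ∀ k : α, indic (M.closure (b ∩ G)) k * cremTarget M b k m =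
        (if k ∈ b ∩ G then (1 : ℝ) else 0)
          - (if k = i then (if i ∈ b ∩ G then (1 : ℝ) else 0) else 0)
          - (if k = j then (if j ∈ b ∩ G then (1 : ℝ) else 0) else 0)
          + (if k = m then (if i ∈ b ∩ G ∧ j ∈ b ∩ G then (1 : ℝ) else 0) else 0) := by
      intro k
      by_cases hkb : k ∈ b
      · have hkm' : ¬ k = m := fun h => hm (h ▸ hkb)
        have e1 : k ∈ M.closure (b ∩ G) ↔ k ∈ b ∩ G := hFb k hkb
        have e2 : m ∈ M.closure (b \ {k}) ↔ (¬ i = k ∧ ¬ j = k) := by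
          rw [P _ Set.diff_subset]
          simp [Set.mem_diff, hi, hj]
        simp only [cremTarget, if_pos hkb, indic_apply]
        by_cases h4 : k = i
        · subst h4
          have h5 : ¬ (k = j) := hij
          by_cases h3 : k ∈ b ∩ G <;> simp [e1, e2, h3, h5, hkm'] <;> ring
        · by_cases h5 : k = j
          · subst h5
            by_cases h3 : k ∈ b ∩ G <;>
              simp [e1, e2, h3, h4, hkm', fun h : i = k => h4 h.symm] <;> ring
          · have e2' : m ∈ M.closure (b \ {k}) :=
              e2.2 ⟨fun h => h4 h.symm, fun h => h5 h.symm⟩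
            by_cases h3 : k ∈ b ∩ G <;>
              simp [e1, e2', h3, h4, h5, hkm'] <;> ring
      · have e1 : k ∉ b ∩ G := fun h => hkb h.1
        have h4 : ¬ k = i := fun h => hkb (h ▸ hi)
        have h5 : ¬ k = j := fun h => hkb (h ▸ hj)
        simp only [cremTarget, if_neg hkb, indic_apply]
        by_cases h6 : k = m
        · subst h6
          have e7 : k ∈ M.closure (b ∩ G) ↔ (i ∈ b ∩ G ∧ j ∈ b ∩ G) := P _ haS
          simp [e1, e7, h4, h5]
        · have hmk : m ∉ ({k} : Set α) := fun h => h6 (Set.mem_singleton_iff.1 h).symm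
          simp [e1, h4, h5, h6, hmk]
    rw [Finset.sum_congr rfl fun k _ => hsum k, Finset.sum_add_distrib,
      Finset.sum_sub_distrib, Finset.sum_sub_distrib,
      Finset.sum_ite_eq' Finset.univ i, Finset.sum_ite_eq' Finset.univ j,
      Finset.sum_ite_eq' Finset.univ m]
    simp only [Finset.mem_univ, if_true]
    have e8 : m ∈ M.closure (b \ G) ↔ (i ∉ G ∧ j ∉ G) := by
      rw [P _ hdS]
      simp [Set.mem_diff, hi, hj]
    rw [indic_apply]
    by_cases hiG : i ∈ G <;> by_cases hjG : j ∈ G <;>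
      simp [e8, hiG, hjG, hi, hj, Set.mem_inter_iff] <;> ring

lemma proj_one_eq_zero (α : Type*) [Fintype α] : proj α (fun _ => (1 : ℝ)) = 0 := by
  have h : (fun _ => (1 : ℝ)) ∈ lineSub α := Submodule.mem_span_singleton_self _
  simpa [proj, Submodule.mkQ_apply] using (Submodule.Quotient.mk_eq_zero _).2 h

end Aux

/-- Let `b` be a basis of a simple matroid such that the sets
`cl{i,j} \ {i,j}` for `i,j ∈ b` partition `E \ b`. Then the Cremona map descends to a
linear automorphism of `ℝ^E/ℝ𝟙`; every flat `G` is the disjoint union of the flats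
`cl(b ∩ G)` and `G ∩ cl(b \ G)`; and `crem_b` fixes `v_{G ∩ cl(b \ G)}` and sends
`v_{cl(b ∩ G)}` to `v_{cl(b \ G)}` in `ℝ^E/ℝ𝟙`. -/
theorem cremona_involution_on_flats
    {α : Type*} [Fintype α] (M : Matroid α) (hE : M.E = Set.univ) (hs : Simple M)
    (b : Set α) (hb : M.IsBase b)
    (hcover : ∀ k, k ∉ b → ∃ i ∈ b, ∃ j ∈ b, i ≠ j ∧ k ∈ M.closure {i, j} \ {i, j})
    (hdisj : ∀ i ∈ b, ∀ j ∈ b, ∀ i' ∈ b, ∀ j' ∈ b, i ≠ j → i' ≠ j' →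
      ({i, j} : Set α) ≠ {i', j'} →
      Disjoint (M.closure {i, j} \ {i, j}) (M.closure {i', j'} \ {i', j'})) :
    (∃ ψ : Amb α ≃ₗ[ℝ] Amb α, ∀ x, ψ (proj α x) = proj α (cremAff M b x)) ∧
    ∀ G, M.IsFlat G →
      (M.IsFlat (M.closure (b ∩ G)) ∧ M.IsFlat (G ∩ M.closure (b \ G)) ∧
        G = M.closure (b ∩ G) ∪ (G ∩ M.closure (b \ G)) ∧
        Disjoint (M.closure (b ∩ G)) (G ∩ M.closure (b \ G))) ∧
      (proj α (cremAff M b (indic (G ∩ M.closure (b \ G)))) =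
          proj α (indic (G ∩ M.closure (b \ G))) ∧
        proj α (cremAff M b (indic (M.closure (b ∩ G)))) =
          proj α (indic (M.closure (b \ G)))) := by
  have hdS : b \ Set.univ ⊆ b := Set.diff_subset
  have hindic_empty : indic (∅ : Set α) = (0 : α → ℝ) := by
    funext m; simp [indic_apply]
  have hindic_univ : indic (Set.univ : Set α) = (fun _ => (1 : ℝ)) := by
    funext m; simp [indic_apply]
  -- the image of 𝟙 under the affine Cremona map is a multiple of 𝟙
  have huniv_flat : M.IsFlat (Set.univ : Set α) := hE ▸ M.ground_isFlat
  have hone : ∃ c : ℝ, cremAff M b (fun _ => (1 : ℝ)) = c • (fun _ => (1 : ℝ)) := by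
    have h := master hE hs hb hcover huniv_flat
    have ha : indic (M.closure (b ∩ Set.univ)) = (fun _ => (1 : ℝ)) := by
      rw [Set.inter_univ, hb.closure_eq, hE, hindic_univ]
    have hz : indic (M.closure (b \ Set.univ)) = (0 : α → ℝ) := by
      rw [Set.diff_univ, cl_empty hE hs, hindic_empty]
    rw [ha, hz, zero_add] at h
    exact ⟨_, h⟩
  have hker : lineSub α ≤ LinearMap.ker ((proj α).comp (cremAff M b)) := by
    show Submodule.span ℝ {fun _ => (1 : ℝ)} ≤ _
    rw [Submodule.span_le]
    intro x hx
    rw [Set.mem_singleton_iff] at hx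
    subst hx
    obtain ⟨c, hone'⟩ := hone
    rw [SetLike.mem_coe, LinearMap.mem_ker, LinearMap.comp_apply, hone', map_smul,
      proj_one_eq_zero, smul_zero]
  set ψ₀ : Amb α →ₗ[ℝ] Amb α :=
    Submodule.liftQ (lineSub α) ((proj α).comp (cremAff M b)) hker with hψ₀def
  have hψ₀ : ∀ x, ψ₀ (proj α x) = proj α (cremAff M b x) := by
    intro x
    have hx : proj α x = Submodule.Quotient.mk x := rfl
    rw [hψ₀def, hx, Submodule.liftQ_apply, LinearMap.comp_apply]
  have hproj_add_one : ∀ (x : α → ℝ) (c : ℝ),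
      proj α (x + c • (fun _ => (1 : ℝ))) = proj α x := by
    intro x c
    rw [map_add, map_smul, proj_one_eq_zero, smul_zero, add_zero]
  have hsq : ψ₀.comp ψ₀ = LinearMap.id := by
    apply Submodule.linearMap_qext
    apply Module.Basis.ext (Pi.basisFun ℝ α)
    intro k
    have hbk : (Pi.basisFun ℝ α) k = indic {k} := by
      funext m
      rw [Pi.basisFun_apply]
      simp [indic_apply, Pi.single_apply]
    simp only [LinearMap.comp_apply, Submodule.mkQ_apply, LinearMap.id_apply, hbk]
    show ψ₀ (ψ₀ (proj α (indic {k}))) = proj α (indic {k})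
    rw [hψ₀, crem_single]
    by_cases hkb : k ∈ b
    · rw [show cremTarget M b k = indic (M.closure (b \ {k})) from by
        simp [cremTarget, hkb]]
      rw [hψ₀]
      have hbk2 : b ∩ M.closure (b \ {k}) = b \ {k} := by
        apply subset_antisymm
        · rintro l ⟨hlb, hlcl⟩
          exact (mem_cl_basis hE hb hlb Set.diff_subset).1 hlcl
        · exact fun l hl => ⟨hl.1,
            M.subset_closure _ (by rw [hE]; exact Set.subset_univ _) hl⟩
      have hbk3 : b \ M.closure (b \ {k}) = {k} := by
        apply subset_antisymm
        · rintro l ⟨hlb, hlcl⟩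
          by_contra hlk
          exact hlcl (M.subset_closure _ (by rw [hE]; exact Set.subset_univ _) ⟨hlb, hlk⟩)
        · intro l hl
          rw [Set.mem_singleton_iff] at hl
          subst hl
          exact ⟨hkb, hb.indep.notMem_closure_sdiff_of_mem hkb⟩
      have hm := master hE hs hb hcover (flat_closure M (b \ {k}))
      have ea : indic (M.closure (b \ {k})) = indic (M.closure (b ∩ M.closure (b \ {k}))) := by
        rw [hbk2]
      have eb : indic (M.closure (b \ M.closure (b \ {k}))) = indic ({k} : Set α) := by
        rw [hbk3, cl_single hE hs]
      rw [ea, hm, hproj_add_one, eb]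
    · rw [show cremTarget M b k = indic ({k} : Set α) from by
        simp [cremTarget, hkb]]
      rw [hψ₀, crem_single, show cremTarget M b k = indic ({k} : Set α) from by
        simp [cremTarget, hkb]]
  constructor
  · refine ⟨LinearEquiv.ofLinear ψ₀ ψ₀ hsq hsq, fun x => ?_⟩
    rw [LinearEquiv.ofLinear_apply, hψ₀]
  · intro G hG
    have haS : b ∩ G ⊆ b := Set.inter_subset_left
    have hdS' : b \ G ⊆ b := Set.diff_subset
    have hSb : ∀ k ∈ G ∩ M.closure (b \ G), k ∉ b := by
      intro k hk hkb
      exact ((mem_cl_basis hE hb hkb hdS').1 hk.2).2 hk.1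
    refine ⟨⟨flat_closure M _, ?_, ?_, ?_⟩, ?_, ?_⟩
    · -- G ∩ cl(b\G) is a flat
      have h1 : M.closure (G ∩ M.closure (b \ G)) = G ∩ M.closure (b \ G) := by
        refine subset_antisymm (Set.subset_inter ?_ ?_)
          (M.subset_closure _ (by rw [hE]; exact Set.subset_univ _))
        · have := M.closure_subset_closure
            (Set.inter_subset_left : G ∩ M.closure (b \ G) ⊆ G)
          rwa [hG.closure] at this
        · have := M.closure_subset_closure
            (Set.inter_subset_right : G ∩ M.closure (b \ G) ⊆ M.closure (b \ G))
          rwa [M.closure_closure] at this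
      exact h1 ▸ flat_closure M _
    · -- decomposition
      apply subset_antisymm
      · intro k hkG
        by_cases hkb : k ∈ b
        · exact Or.inl (M.subset_closure _ (by rw [hE]; exact Set.subset_univ _) ⟨hkb, hkG⟩)
        · obtain ⟨i, hi, j, hj, hij, hkm⟩ := hcover k hkb
          have hki : k ≠ i := fun h => hkm.2 (by simp [h])
          have hkj : k ≠ j := fun h => hkm.2 (by simp [h])
          by_cases hiG : i ∈ G <;> by_cases hjG : j ∈ G
          · refine Or.inl (M.closure_subset_closure ?_ hkm.1)
            intro z hz
            rcases hz with rfl | hz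
            · exact ⟨hi, hiG⟩
            · rw [Set.mem_singleton_iff] at hz; subst hz; exact ⟨hj, hjG⟩
          · exact absurd (flat_pair_step hE hs hG hiG hkG hkm.1 hki) hjG
          · have hk1 : k ∈ M.closure {j, i} := by rw [Set.pair_comm]; exact hkm.1
            exact absurd (flat_pair_step hE hs hG hjG hkG hk1 hkj) hiG
          · refine Or.inr ⟨hkG, M.closure_subset_closure ?_ hkm.1⟩
            intro z hz
            rcases hz with rfl | hz
            · exact ⟨hi, hiG⟩
            · rw [Set.mem_singleton_iff] at hz; subst hz; exact ⟨hj, hjG⟩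
      · apply Set.union_subset
        · have := M.closure_subset_closure (Set.inter_subset_right : b ∩ G ⊆ G)
          rwa [hG.closure] at this
        · exact Set.inter_subset_left
    · -- disjointness
      rw [Set.disjoint_left]
      intro k hk1 hk2
      by_cases hkb : k ∈ b
      · exact ((mem_cl_basis hE hb hkb hdS').1 hk2.2).2 hk2.1
      · obtain ⟨i, hi, j, hj, hij, hkm⟩ := hcover k hkb
        have h1 := (mem_cl_pair hE hs hb hi hj hij hkm haS).1 hk1
        have h2 := (mem_cl_pair hE hs hb hi hj hij hkm hdS').1 hk2.2
        exact h2.1.2 h1.1.2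
    · -- fixed vector
      rw [crem_fix _ hSb]
    · -- image of v_{cl(b ∩ G)}
      rw [master hE hs hb hcover hG, hproj_add_one]

end BergmanFans
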